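/- With the definitions and assumptions in the context, the inclusions underbar-S_* ⊆ S_* ⊆ S̄_* ⊆ S_s hold, where underbar-S_* = {x ∈ ℝ^n : h̄_*(x) ≥ (1/2)·T_s·l_φ·l_s}. -/

import Mathlib

open Set

/-- Under the semiflow `φ` on `ℝ^n` with safe set `S_s = {h_s ≥ 0}`, backup safe
set `S_b = {h_b ≥ 0}` with `S_b ⊆ S_s` forward invariant under `φ`,
`S_* = {x : h_*(x) ≥ 0}` where `h_*(x) = min{h_b(φ(x,T)), inf_{τ∈[0,T]} h_s(φ(x,τ))}`
(so `x ∈ S_*` iff `h_b(φ(x,T)) ≥ 0` and `h_s(φ(x,τ)) ≥ 0` for all `τ ∈ [0,T]`),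
`T_s = T/N`, `h̄_*(x) = min{h_b(φ(x,N·T_s)), min_{i∈{0,…,N}} h_s(φ(x,i·T_s))}`,
`S̄_* = {x : h̄_*(x) ≥ 0}`, `h_s` Lipschitz with constant `l_s > 0` (Euclidean norm),
`τ ↦ φ(x,τ)` Lipschitz on `[0,T]` with constant `l_φ > 0`, and
`underbar-S_* = {x : h̄_*(x) ≥ (1/2)·T_s·l_φ·l_s}`, we have
`underbar-S_* ⊆ S_* ⊆ S̄_* ⊆ S_s`. -/
theorem ubarSstar_subset_Sstar_subset_SbarStar_subset_Ss
    (n : ℕ) (hn : 0 < n)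
    (φ : EuclideanSpace ℝ (Fin n) → ℝ → EuclideanSpace ℝ (Fin n))
    (hφ0 : ∀ x, φ x 0 = x)
    (hφadd : ∀ (x : EuclideanSpace ℝ (Fin n)) (s t : ℝ), 0 ≤ s → 0 ≤ t →
      φ x (s + t) = φ (φ x s) t)
    (hs hb : EuclideanSpace ℝ (Fin n) → ℝ)
    (Ss Sb Sstar : Set (EuclideanSpace ℝ (Fin n)))
    (hSs : Ss = {x | 0 ≤ hs x})
    (hSb : Sb = {x | 0 ≤ hb x})
    (hsub : Sb ⊆ Ss)
    (hinv : ∀ x ∈ Sb, ∀ t : ℝ, 0 ≤ t → φ x t ∈ Sb)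
    (T : ℝ) (hT : 0 < T)
    (hSstar : Sstar = {x | 0 ≤ hb (φ x T) ∧ ∀ τ ∈ Icc (0:ℝ) T, 0 ≤ hs (φ x τ)})
    (N : ℕ) (hN : 0 < N) (Ts : ℝ) (hTs : Ts = T / N)
    (hbarStar : EuclideanSpace ℝ (Fin n) → ℝ)
    (hhbarStar : ∀ x, hbarStar x =
      min (hb (φ x ((N : ℝ) * Ts)))
        ((Finset.range (N + 1)).inf' Finset.nonempty_range_add_one
          (fun i => hs (φ x ((i : ℝ) * Ts)))))
    (SbarStar : Set (EuclideanSpace ℝ (Fin n)))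
    (hSbarStar : SbarStar = {x | 0 ≤ hbarStar x})
    (ls lφ : ℝ) (hls : 0 < ls) (hlφ : 0 < lφ)
    (hlip_s : ∀ x y : EuclideanSpace ℝ (Fin n), |hs x - hs y| ≤ ls * ‖x - y‖)
    (hlip_φ : ∀ x : EuclideanSpace ℝ (Fin n), ∀ τ₁ ∈ Icc (0:ℝ) T, ∀ τ₂ ∈ Icc (0:ℝ) T,
      ‖φ x τ₁ - φ x τ₂‖ ≤ lφ * |τ₁ - τ₂|)
    (ubarSstar : Set (EuclideanSpace ℝ (Fin n)))
    (hubarSstar : ubarSstar = {x | (1 / 2) * Ts * lφ * ls ≤ hbarStar x}) :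
    ubarSstar ⊆ Sstar ∧ Sstar ⊆ SbarStar ∧ SbarStar ⊆ Ss := by
  have hTs0 : 0 < Ts := by
    rw [hTs]; positivity
  have hNT : (N : ℝ) * Ts = T := by
    rw [hTs]; field_simp
  have hgrid : ∀ i : ℕ, i ≤ N → (i : ℝ) * Ts ∈ Icc (0:ℝ) T := by
    intro i hi
    constructor
    · positivity
    · rw [← hNT]
      have : (i : ℝ) ≤ (N : ℝ) := by exact_mod_cast hi
      nlinarith
  refine ⟨?_, ?_, ?_⟩
  · -- ubarSstar ⊆ Sstar
    intro x hx
    rw [hubarSstar, mem_setOf_eq, hhbarStar] at hx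
    have hε : (0:ℝ) ≤ (1/2) * Ts * lφ * ls := by positivity
    have h1 : (1/2) * Ts * lφ * ls ≤ hb (φ x ((N:ℝ) * Ts)) :=
      le_trans hx (min_le_left _ _)
    have h2 : ∀ i : ℕ, i ≤ N → (1/2) * Ts * lφ * ls ≤ hs (φ x ((i:ℝ) * Ts)) := by
      intro i hi
      exact le_trans (le_trans hx (min_le_right _ _))
        (Finset.inf'_le _ (Finset.mem_range.mpr (Nat.lt_succ_of_le hi)))
    rw [hSstar]
    refine ⟨by rw [← hNT]; exact le_trans hε h1, ?_⟩
    intro τ hτ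
    obtain ⟨hτ0, hτT⟩ := hτ
    have key : ∀ i : ℕ, i ≤ N → |τ - (i:ℝ) * Ts| ≤ Ts / 2 → 0 ≤ hs (φ x τ) := by
      intro i hi hclose
      have hiT := hgrid i hi
      have hA := hlip_φ x τ ⟨hτ0, hτT⟩ ((i:ℝ) * Ts) hiT
      have hB := hlip_s (φ x τ) (φ x ((i:ℝ) * Ts))
      have hC := h2 i hi
      have hn1 : ‖φ x τ - φ x ((i:ℝ) * Ts)‖ ≤ lφ * (Ts / 2) := by
        calc ‖φ x τ - φ x ((i:ℝ) * Ts)‖ ≤ lφ * |τ - (i:ℝ) * Ts| := hA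
        _ ≤ lφ * (Ts / 2) := by nlinarith
      have habs : hs (φ x ((i:ℝ) * Ts)) - hs (φ x τ) ≤ ls * (lφ * (Ts / 2)) := by
        have := neg_abs_le (hs (φ x τ) - hs (φ x ((i:ℝ) * Ts)))
        nlinarith
      nlinarith
    -- choose nearest grid point
    have hτTs : 0 ≤ τ / Ts := by positivity
    set i0 := ⌊τ / Ts⌋₊ with hi0def
    have hfl : (i0 : ℝ) ≤ τ / Ts := Nat.floor_le hτTs
    have hfu : τ / Ts < (i0 : ℝ) + 1 := Nat.lt_floor_add_one _
    have hi0le : (i0 : ℝ) * Ts ≤ τ := by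
      have := mul_le_mul_of_nonneg_right hfl (le_of_lt hTs0)
      calc (i0 : ℝ) * Ts ≤ (τ / Ts) * Ts := this
      _ = τ := by field_simp
    have hi0lt : τ < ((i0 : ℝ) + 1) * Ts := by
      have := mul_lt_mul_of_pos_right hfu hTs0
      calc τ = (τ / Ts) * Ts := by field_simp
      _ < ((i0 : ℝ) + 1) * Ts := this
    have hi0N : i0 ≤ N := by
      have : τ / Ts ≤ (N : ℝ) := by
        rw [div_le_iff₀ hTs0]
        rw [← hNT] at hτT; linarith
      calc i0 = ⌊τ / Ts⌋₊ := rfl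
      _ ≤ ⌊(N : ℝ)⌋₊ := Nat.floor_le_floor this
      _ = N := Nat.floor_natCast N
    by_cases hc : τ - (i0 : ℝ) * Ts ≤ Ts / 2
    · exact key i0 hi0N (abs_le.mpr ⟨by linarith, hc⟩)
    · push_neg at hc
      have hi0N' : i0 + 1 ≤ N := by
        rcases Nat.lt_or_ge i0 N with h | h
        · exact h
        · exfalso
          have hiN : i0 = N := le_antisymm hi0N h
          rw [hiN, hNT] at hc
          linarith
      refine key (i0 + 1) hi0N' (abs_le.mpr ⟨?_, ?_⟩)
      · push_cast
        linarith
      · push_cast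
        linarith
  · -- Sstar ⊆ SbarStar
    intro x hx
    rw [hSstar, mem_setOf_eq] at hx
    obtain ⟨hx1, hx2⟩ := hx
    rw [hSbarStar, mem_setOf_eq, hhbarStar]
    refine le_min (by rw [hNT]; exact hx1) ?_
    apply Finset.le_inf'
    intro i hi
    exact hx2 _ (hgrid i (Nat.lt_succ_iff.mp (Finset.mem_range.mp hi)))
  · -- SbarStar ⊆ Ss
    intro x hx
    rw [hSbarStar, mem_setOf_eq, hhbarStar] at hx
    rw [hSs, mem_setOf_eq]
    have h0 : (0:ℝ) ≤ hs (φ x (((0:ℕ) : ℝ) * Ts)) := by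
      exact le_trans (le_trans hx (min_le_right _ _))
        (Finset.inf'_le _ (Finset.mem_range.mpr (Nat.succ_pos N)))
    simpa [hφ0] using h0
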